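/- Let (X,d) be a complete separable metric space and μ a Borel probability measure on X. For every C ∈ ℝ, the sublevel set {ν ∈ 𝒫(X) : H(ν | μ) ≤ C} of the relative entropy is tight: for every ε > 0 there is a compact K ⊆ X with ν(X \ K) ≤ ε for all ν in the sublevel set. -/

import Mathlib

open MeasureTheory Filter Topology ENNReal

/-- Tightness of a single Borel probability measure on a complete separable metric space. -/
lemma aux_tight_single {X : Type*} [MetricSpace X] [CompleteSpace X]
    [TopologicalSpace.SeparableSpace X] [MeasurableSpace X] [BorelSpace X]
    (μ : Measure X) [IsProbabilityMeasure μ] {δ : ℝ≥0∞} (hδ : 0 < δ) :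
    ∃ K : Set X, IsCompact K ∧ μ Kᶜ ≤ δ := by
  rcases isEmpty_or_nonempty X with hX | hX
  · exact absurd (measure_univ (μ := μ)) (by simp [Set.univ_eq_empty_iff.mpr hX])
  · set u := TopologicalSpace.denseSeq X with hu_def
    have hu : DenseRange u := TopologicalSpace.denseRange_denseSeq X
    have key : ∀ m : ℕ, ∃ n : ℕ,
        μ (⋃ i ∈ Finset.range n, Metric.closedBall (u i) (1/(m+1)))ᶜ < δ / 2^(m+1) := by
      intro m
      set s : ℕ → Set X :=
        fun n => (⋃ i ∈ Finset.range n, Metric.closedBall (u i) (1/(m+1)))ᶜ with hs_def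
      have hmeas : ∀ n, MeasureTheory.NullMeasurableSet (s n) μ := fun n =>
        ((MeasurableSet.biUnion (Finset.range n).countable_toSet
          (fun i _ => measurableSet_closedBall)).compl).nullMeasurableSet
      have hanti : Antitone s := by
        intro a b hab
        apply Set.compl_subset_compl.2
        intro x hx
        simp only [Set.mem_iUnion] at hx ⊢
        obtain ⟨i, hi, h⟩ := hx
        exact ⟨i, Finset.mem_range.2 (lt_of_lt_of_le (Finset.mem_range.1 hi) hab), h⟩
      have hcover : (⋃ n, ⋃ i ∈ Finset.range n, Metric.closedBall (u i) (1/(m+1)))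
          = Set.univ := by
        ext x
        simp only [Set.mem_iUnion, Set.mem_univ, iff_true, Finset.mem_range]
        obtain ⟨i, hi⟩ := hu.exists_dist_lt x (by positivity : (0:ℝ) < 1/(m+1))
        exact ⟨i+1, i, Nat.lt_succ_self i, Metric.mem_closedBall.2 hi.le⟩
      have hempty : (⋂ n, s n) = ∅ := by
        simp only [hs_def, ← Set.compl_iUnion, hcover, Set.compl_univ]
      have htend := tendsto_measure_iInter_atTop hmeas hanti ⟨0, measure_ne_top μ _⟩
      rw [hempty, measure_empty] at htend
      have hpos : 0 < δ / 2^(m+1) :=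
        ENNReal.div_pos hδ.ne' (by simp : (2:ℝ≥0∞)^(m+1) ≠ ⊤)
      obtain ⟨n, hn⟩ := (htend.eventually_lt_const hpos).exists
      exact ⟨n, hn⟩
    choose N hN using key
    refine ⟨⋂ m, ⋃ i ∈ Finset.range (N m), Metric.closedBall (u i) (1/(m+1)), ?_, ?_⟩
    · apply TotallyBounded.isCompact_of_isClosed
      · rw [Metric.totallyBounded_iff]
        intro ε hε
        obtain ⟨m, hm⟩ := exists_nat_one_div_lt hε
        refine ⟨u '' (Finset.range (N m)), (Finset.range (N m)).finite_toSet.image u, ?_⟩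
        intro x hx
        have hx' := Set.mem_iInter.1 hx m
        simp only [Set.mem_iUnion] at hx'
        obtain ⟨i, hi, hxi⟩ := hx'
        refine Set.mem_biUnion (Set.mem_image_of_mem u hi) ?_
        exact Metric.mem_ball'.2 (lt_of_le_of_lt (Metric.mem_closedBall'.1 hxi) hm)
      · exact isClosed_iInter fun m =>
          (Finset.range (N m)).finite_toSet.isClosed_biUnion
            (fun i _ => Metric.isClosed_closedBall)
    · rw [Set.compl_iInter]
      refine le_trans (measure_iUnion_le _) ?_
      refine le_trans (ENNReal.tsum_le_tsum fun m => (hN m).le) (le_of_eq ?_)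
      have h1 : ∀ m : ℕ, δ / 2^(m+1) = (δ / 2) * (2⁻¹ : ℝ≥0∞)^m := by
        intro m
        rw [pow_succ, div_eq_mul_inv,
          ENNReal.mul_inv (Or.inl (by positivity)) (Or.inl (by simp)),
          ENNReal.inv_pow, div_eq_mul_inv]
        ring
      calc ∑' m : ℕ, δ / 2^(m+1) = ∑' m : ℕ, (δ / 2) * (2⁻¹ : ℝ≥0∞)^m := by
            exact tsum_congr h1
        _ = (δ / 2) * ∑' m : ℕ, (2⁻¹ : ℝ≥0∞)^m := ENNReal.tsum_mul_left
        _ = (δ / 2) * 2 := by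
            rw [ENNReal.tsum_geometric, ENNReal.one_sub_inv_two, inv_inv]
        _ = δ := ENNReal.div_mul_cancel two_ne_zero (by simp)

/-- Pointwise inequality `y - 1 ≤ y * log y` for `0 ≤ y`. -/
lemma aux_sub_one_le_mul_log {y : ℝ} (hy : 0 ≤ y) : y - 1 ≤ y * Real.log y := by
  rcases eq_or_lt_of_le hy with h | h
  · simp [← h]
  · have h1 : Real.log y⁻¹ ≤ y⁻¹ - 1 := Real.log_le_sub_one_of_pos (inv_pos.2 h)
    rw [Real.log_inv] at h1
    have h2 := mul_le_mul_of_nonneg_left h1 hy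
    have h3 : y * y⁻¹ = 1 := mul_inv_cancel₀ h.ne'
    nlinarith

open Classical in
/-- Relative entropy `H(ν | μ)` (value `⊤` if `ν` is not absolutely continuous with
respect to `μ` or the log-likelihood ratio is not integrable). -/
noncomputable def relEntropy {X : Type*} [MeasurableSpace X] (ν μ : Measure X) : ℝ≥0∞ :=
  if ν ≪ μ ∧ Integrable (llr ν μ) ν then ENNReal.ofReal (∫ x, llr ν μ x ∂ν) else ⊤

/-- On a complete separable metric space, the sublevel sets
`{ν : H(ν | μ) ≤ C}` of the relative entropy with respect to a Borel probability
measure `μ` are tight. -/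
theorem relEntropy_sublevel_tight
    {X : Type*} [MetricSpace X] [CompleteSpace X] [TopologicalSpace.SeparableSpace X]
    [MeasurableSpace X] [BorelSpace X]
    (μ : Measure X) [IsProbabilityMeasure μ] (C : ℝ) :
    ∀ ε : ℝ, 0 < ε → ∃ K : Set X, IsCompact K ∧
      ∀ ν : Measure X, IsProbabilityMeasure ν → relEntropy ν μ ≤ ENNReal.ofReal C →
        ν Kᶜ ≤ ENNReal.ofReal ε := by
  intro ε hε
  set t : ℝ := Real.exp (2 * (max C 0 + 1) / ε) with ht_def
  have ht1 : 1 < t := Real.one_lt_exp_iff.2 (by positivity)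
  have ht0 : 0 < t := lt_trans one_pos ht1
  have hlogt : Real.log t = 2 * (max C 0 + 1) / ε := Real.log_exp _
  have hlogt_pos : 0 < Real.log t := by rw [hlogt]; positivity
  have hδpos : (0:ℝ≥0∞) < ENNReal.ofReal (ε / (2 * t)) :=
    ENNReal.ofReal_pos.2 (by positivity)
  obtain ⟨K, hK_comp, hK_meas⟩ := aux_tight_single μ hδpos
  refine ⟨K, hK_comp, ?_⟩
  intro ν hν hrel
  -- extract absolute continuity and integrability from finiteness of entropy
  by_cases h : ν ≪ μ ∧ Integrable (llr ν μ) ν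
  swap
  · rw [relEntropy, if_neg h] at hrel
    exact absurd (top_le_iff.1 hrel) ENNReal.ofReal_ne_top
  obtain ⟨hac, hint⟩ := h
  rw [relEntropy, if_pos ⟨hac, hint⟩] at hrel
  set H : ℝ := ∫ x, llr ν μ x ∂ν with hH_def
  have hH : H ≤ max C 0 := by
    rcases le_or_gt H 0 with h0 | h0
    · exact h0.trans (le_max_right _ _)
    · rcases (ENNReal.ofReal_le_ofReal_iff' ).1 hrel with h1 | h1
      · exact h1.trans (le_max_left _ _)
      · linarith
  -- the density
  set g : X → ℝ := fun x => (ν.rnDeriv μ x).toReal with hg_def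
  have hg_meas : Measurable g := (Measure.measurable_rnDeriv ν μ).ennreal_toReal
  have hg_nonneg : ∀ x, 0 ≤ g x := fun x => ENNReal.toReal_nonneg
  have hg_int : Integrable g μ := Measure.integrable_toReal_rnDeriv
  have hllr_eq : ∀ x, llr ν μ x = Real.log (g x) := fun x => rfl
  set φ : X → ℝ := fun x => g x * Real.log (g x) with hφ_def
  have hφ_int : Integrable φ μ := by
    have := (integrable_rnDeriv_smul_iff (f := llr ν μ) hac).2 hint
    simpa [hφ_def, hg_def, llr, smul_eq_mul] using this
  have hφ_integral : ∫ x, φ x ∂μ = H := by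
    have := integral_rnDeriv_smul (f := llr ν μ) hac
    simpa [hφ_def, hg_def, llr, smul_eq_mul, hH_def] using this
  have hφ_lb : ∀ x, g x - 1 ≤ φ x := fun x => aux_sub_one_le_mul_log (hg_nonneg x)
  -- the bad set where the density is large
  set S : Set X := {x | t < g x} with hS_def
  have hS_meas : MeasurableSet S := measurableSet_lt measurable_const hg_meas
  have hK_m : MeasurableSet Kᶜ := hK_comp.isClosed.measurableSet.compl
  -- ∫_{Sᶜ} φ ≥ -1
  have h_compl_lb : (-1 : ℝ) ≤ ∫ x in Sᶜ, φ x ∂μ := by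
    have h1 : ∫ x in Sᶜ, (g x - 1) ∂μ ≤ ∫ x in Sᶜ, φ x ∂μ :=
      setIntegral_mono_on (hg_int.sub (integrable_const 1)).integrableOn
        hφ_int.integrableOn hS_meas.compl (fun x _ => hφ_lb x)
    have h2 : ∫ x in Sᶜ, (g x - 1) ∂μ
        = (∫ x in Sᶜ, g x ∂μ) - (μ Sᶜ).toReal := by
      rw [integral_sub hg_int.integrableOn (integrable_const 1), setIntegral_const,
        smul_eq_mul, mul_one, measureReal_def]
    have h3 : 0 ≤ ∫ x in Sᶜ, g x ∂μ :=
      setIntegral_nonneg hS_meas.compl (fun x _ => hg_nonneg x)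
    have h4 : (μ Sᶜ).toReal ≤ 1 := by
      have h := prob_le_one (μ := μ) (s := Sᶜ)
      simpa using ENNReal.toReal_mono one_ne_top h
    linarith
  -- ∫_S φ ≤ H + 1
  have hS_int_le : ∫ x in S, φ x ∂μ ≤ H + 1 := by
    have := integral_add_compl hS_meas hφ_int
    rw [hφ_integral] at this
    linarith
  -- ∫_S g ≤ (H + 1) / log t
  have hS_g_le : ∫ x in S, g x ∂μ ≤ (H + 1) / Real.log t := by
    have h1 : ∫ x in S, g x ∂μ ≤ ∫ x in S, (Real.log t)⁻¹ * φ x ∂μ := by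
      refine setIntegral_mono_on hg_int.integrableOn
        (hφ_int.const_mul _).integrableOn hS_meas ?_
      intro x hx
      have hxt : t < g x := hx
      have hlog : Real.log t ≤ Real.log (g x) := Real.log_le_log ht0 hxt.le
      have hgt : g x * Real.log t ≤ φ x :=
        mul_le_mul_of_nonneg_left hlog (hg_nonneg x)
      have := (le_div_iff₀ hlogt_pos).2 hgt
      rw [div_eq_inv_mul] at this
      exact this
    have h2 : ∫ x in S, (Real.log t)⁻¹ * φ x ∂μ
        = (Real.log t)⁻¹ * ∫ x in S, φ x ∂μ := integral_const_mul _ _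
    have h3 : (Real.log t)⁻¹ * ∫ x in S, φ x ∂μ ≤ (Real.log t)⁻¹ * (H + 1) :=
      mul_le_mul_of_nonneg_left hS_int_le (inv_nonneg.2 hlogt_pos.le)
    rw [div_eq_inv_mul]
    linarith
  -- (H+1)/log t ≤ ε/2
  have hhalf2 : (H + 1) / Real.log t ≤ ε / 2 := by
    rw [hlogt]
    rw [div_le_iff₀ (by positivity : (0:ℝ) < 2 * (max C 0 + 1) / ε)]
    have hmc : (0:ℝ) < max C 0 + 1 := by positivity
    have : ε / 2 * (2 * (max C 0 + 1) / ε) = max C 0 + 1 := by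
      field_simp
    rw [this]
    linarith
  -- μ Kᶜ small in real terms
  have hμK : (μ Kᶜ).toReal ≤ ε / (2 * t) :=
    ENNReal.toReal_le_of_le_ofReal (by positivity) hK_meas
  -- split the integral
  have h_split : (ν Kᶜ).toReal ≤ ε := by
    have h_eq : (ν Kᶜ).toReal = ∫ x in Kᶜ, g x ∂μ :=
      (Measure.setIntegral_toReal_rnDeriv hac Kᶜ).symm
    have hKS : Kᶜ = (Kᶜ ∩ Sᶜ) ∪ (Kᶜ ∩ S) := by
      rw [← Set.inter_union_distrib_left, Set.compl_union_self, Set.inter_univ]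
    have h_disj : Disjoint (Kᶜ ∩ Sᶜ) (Kᶜ ∩ S) :=
      Set.disjoint_of_subset Set.inter_subset_right Set.inter_subset_right
        disjoint_compl_left
    have h_sum : ∫ x in Kᶜ, g x ∂μ
        = (∫ x in Kᶜ ∩ Sᶜ, g x ∂μ) + ∫ x in Kᶜ ∩ S, g x ∂μ := by
      have h := setIntegral_union h_disj (hK_m.inter hS_meas)
        hg_int.integrableOn hg_int.integrableOn
      rwa [← hKS] at h
    -- first piece: density bounded by t
    have h_piece1 : ∫ x in Kᶜ ∩ Sᶜ, g x ∂μ ≤ ε / 2 := by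
      have h1 : ∫ x in Kᶜ ∩ Sᶜ, g x ∂μ ≤ ∫ x in Kᶜ ∩ Sᶜ, t ∂μ := by
        refine setIntegral_mono_on hg_int.integrableOn (integrableOn_const ?_)
          (hK_m.inter hS_meas.compl) ?_
        · exact measure_ne_top μ _
        · intro x hx
          have : ¬ t < g x := hx.2
          linarith [not_lt.1 this]
      have h2 : ∫ x in Kᶜ ∩ Sᶜ, t ∂μ = (μ (Kᶜ ∩ Sᶜ)).toReal * t := by
        rw [setIntegral_const, smul_eq_mul, measureReal_def]
      have h3 : (μ (Kᶜ ∩ Sᶜ)).toReal ≤ ε / (2 * t) := by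
        refine le_trans ?_ hμK
        exact ENNReal.toReal_mono (measure_ne_top μ _)
          (measure_mono Set.inter_subset_left)
      have h4 : (μ (Kᶜ ∩ Sᶜ)).toReal * t ≤ (ε / (2 * t)) * t :=
        mul_le_mul_of_nonneg_right h3 ht0.le
      have h5 : (ε / (2 * t)) * t = ε / 2 := by field_simp
      linarith
    -- second piece
    have h_piece2 : ∫ x in Kᶜ ∩ S, g x ∂μ ≤ ε / 2 := by
      have h1 : ∫ x in Kᶜ ∩ S, g x ∂μ ≤ ∫ x in S, g x ∂μ := by
        refine setIntegral_mono_set hg_int.integrableOn ?_ ?_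
        · exact Filter.Eventually.of_forall fun x => hg_nonneg x
        · exact Filter.Eventually.of_forall fun x hx => hx.2
      linarith [hS_g_le, hhalf2]
    rw [h_eq, h_sum]
    linarith
  exact ENNReal.le_ofReal_iff_toReal_le (measure_ne_top ν _) hε.le |>.2 h_split
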